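/- Fix an inner product <.,.> on R^m with induced norm |.|. Let X = (X_J, X_{~J}) with X_J and X_{~J} independent, let Y_J have the same distribution as X_J and be independent of X, and let f be measurable with f(X) square-integrable R^m-valued. If the total sensitivity index V^tot_{X_J} = Var(f(X)) - Var(E(f(X)|X_{~J})) equals 0, then f(Y_J, X_{~J}) = f(X) almost surely; equivalently, for mu_{X_J}-almost every y_J, f(y_J, X_{~J}) = f(X) almost surely. -/

import Mathlib

open MeasureTheory ProbabilityTheory

/-- The generalized variance `Var(Z) = E[‖Z - E Z‖²]` for a random vector `Z` with values in a
real inner product space with its induced norm. -/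
noncomputable def gVar {Ω E : Type*} [MeasurableSpace Ω]
    [NormedAddCommGroup E] [InnerProductSpace ℝ E] [FiniteDimensional ℝ E]
    (μ : Measure Ω) (Z : Ω → E) : ℝ :=
  ∫ ω, ‖Z ω - ∫ ω', Z ω' ∂μ‖ ^ 2 ∂μ

lemma sq_integral_le {Ω : Type*} [MeasurableSpace Ω] (μ : Measure Ω) [IsProbabilityMeasure μ]
    {u : Ω → ℝ} (hu : Integrable u μ) (hu2 : Integrable (fun x => u x ^ 2) μ) :
    (∫ x, u x ∂μ) ^ 2 ≤ ∫ x, u x ^ 2 ∂μ := by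
  have hm : MemLp u 2 μ := (memLp_two_iff_integrable_sq hu.aestronglyMeasurable).mpr hu2
  have h := variance_nonneg u μ
  rw [variance_eq_sub hm] at h
  simp only [Pi.pow_apply] at h
  linarith

lemma integrable_inner_of_memL2 {Ω E : Type*} [MeasurableSpace Ω]
    [NormedAddCommGroup E] [InnerProductSpace ℝ E] {μ : Measure Ω}
    {a b : Ω → E} (ha : MemLp a 2 μ) (hb : MemLp b 2 μ) :
    Integrable (fun ω => (inner ℝ (a ω) (b ω) : ℝ)) μ := by
  have h := MeasureTheory.L2.integrable_inner (𝕜 := ℝ) (ha.toLp a) (hb.toLp b)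
  refine h.congr ?_
  filter_upwards [ha.coeFn_toLp, hb.coeFn_toLp] with ω h1 h2
  rw [h1, h2]

lemma gVar_congr_ae {Ω E : Type*} [MeasurableSpace Ω]
    [NormedAddCommGroup E] [InnerProductSpace ℝ E] [FiniteDimensional ℝ E]
    (μ : Measure Ω) {Z₁ Z₂ : Ω → E} (h : Z₁ =ᵐ[μ] Z₂) :
    gVar μ Z₁ = gVar μ Z₂ := by
  unfold gVar
  rw [show (∫ ω', Z₁ ω' ∂μ) = ∫ ω', Z₂ ω' ∂μ from integral_congr_ae h]
  exact integral_congr_ae (h.mono fun ω hω => by simp only [hω])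

lemma gVar_map {Ω β E : Type*} [MeasurableSpace Ω] [MeasurableSpace β]
    [NormedAddCommGroup E] [InnerProductSpace ℝ E] [FiniteDimensional ℝ E]
    (μ : Measure Ω) {T : Ω → β} (hT : AEMeasurable T μ)
    {Z : β → E} (hZ : AEStronglyMeasurable Z (μ.map T)) :
    gVar (μ.map T) Z = gVar μ (fun ω => Z (T ω)) := by
  unfold gVar
  rw [show (∫ b, Z b ∂(μ.map T)) = ∫ ω, Z (T ω) ∂μ from integral_map hT hZ]
  exact integral_map hT (((hZ.sub aestronglyMeasurable_const).norm).pow 2)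

/-- If the total sensitivity index `V^tot_{X_J} = Var(f(X)) - Var(E(f(X)|X_{~J}))` vanishes,
then `f(Y_J, X_{~J}) = f(X)` almost surely, for `Y_J` an independent copy of `X_J` independent
of `X`; equivalently, for `μ_{X_J}`-almost every `y_J`, `f(y_J, X_{~J}) = f(X)` almost surely. -/
theorem total_index_zero_fixing
    {Ω α β E : Type*} [MeasurableSpace Ω] [MeasurableSpace α] [MeasurableSpace β]
    [NormedAddCommGroup E] [InnerProductSpace ℝ E] [FiniteDimensional ℝ E]
    [MeasurableSpace E] [BorelSpace E]
    (μ : Measure Ω) [IsProbabilityMeasure μ]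
    (XJ YJ : Ω → α) (XnJ : Ω → β)
    (hXJ : Measurable XJ) (hYJ : Measurable YJ) (hXnJ : Measurable XnJ)
    (hindep : IndepFun XJ XnJ μ)
    (hYid : IdentDistrib YJ XJ μ μ)
    (hYindep : IndepFun YJ (fun ω => (XJ ω, XnJ ω)) μ)
    (f : α × β → E) (hf : Measurable f)
    (hf2 : MemLp (fun ω => f (XJ ω, XnJ ω)) 2 μ)
    (htot : gVar μ (fun ω => f (XJ ω, XnJ ω))
        - gVar μ (μ[(fun ω => f (XJ ω, XnJ ω)) | MeasurableSpace.comap XnJ inferInstance]) = 0) :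
    (fun ω => f (YJ ω, XnJ ω)) =ᵐ[μ] (fun ω => f (XJ ω, XnJ ω))
    ∧ ∀ᵐ yJ ∂(μ.map XJ),
        (fun ω => f (yJ, XnJ ω)) =ᵐ[μ] fun ω => f (XJ ω, XnJ ω) := by
  have hT : Measurable fun ω => (XJ ω, XnJ ω) := hXJ.prodMk hXnJ
  set πJ : Measure α := μ.map XJ with hπJ
  set πnJ : Measure β := μ.map XnJ with hπnJ
  haveI : IsProbabilityMeasure πJ := Measure.isProbabilityMeasure_map hXJ.aemeasurable
  haveI : IsProbabilityMeasure πnJ := Measure.isProbabilityMeasure_map hXnJ.aemeasurable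
  set ρ : Measure (α × β) := πJ.prod πnJ with hρdef
  have hmapT : μ.map (fun ω => (XJ ω, XnJ ω)) = ρ :=
    (indepFun_iff_map_prod_eq_prod_map_map hXJ.aemeasurable hXnJ.aemeasurable).mp hindep
  have hfsm : StronglyMeasurable f := hf.stronglyMeasurable
  have hF2 : MemLp f 2 ρ := by
    rw [← hmapT]
    exact (memLp_map_measure_iff hf.aestronglyMeasurable hT.aemeasurable).mpr hf2
  have hFint : Integrable f ρ := hF2.integrable one_le_two
  have hnormsq : Integrable (fun p => ‖f p‖ ^ 2) ρ :=
    (memLp_two_iff_integrable_sq_norm hf.aestronglyMeasurable).mp hF2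
  set g : β → E := fun b => ∫ y, f (y, b) ∂πJ with hgdef
  have hgsm : StronglyMeasurable g := hfsm.integral_prod_left'
  -- g is in L²(πnJ)
  have hgbound : ∀ᵐ b ∂πnJ, ‖g b‖ ^ 2 ≤ ∫ y, ‖f (y, b)‖ ^ 2 ∂πJ := by
    filter_upwards [hFint.prod_left_ae, hnormsq.prod_left_ae] with b h1 h2
    have h3 : ‖g b‖ ≤ ∫ y, ‖f (y, b)‖ ∂πJ := norm_integral_le_integral_norm _
    have h4 : (∫ y, ‖f (y, b)‖ ∂πJ) ^ 2 ≤ ∫ y, ‖f (y, b)‖ ^ 2 ∂πJ :=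
      sq_integral_le πJ h1.norm (by simpa using h2)
    calc ‖g b‖ ^ 2 ≤ (∫ y, ‖f (y, b)‖ ∂πJ) ^ 2 :=
          pow_le_pow_left₀ (norm_nonneg _) h3 2
      _ ≤ _ := h4
  have hgL2 : MemLp g 2 πnJ := by
    rw [memLp_two_iff_integrable_sq_norm hgsm.aestronglyMeasurable]
    refine Integrable.mono' hnormsq.integral_prod_right
      ((hgsm.norm.pow 2).aestronglyMeasurable) ?_
    filter_upwards [hgbound] with b hb
    rwa [Real.norm_of_nonneg (by positivity)]
  have hsnd : ρ.map Prod.snd = πnJ := by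
    rw [hρdef, Measure.map_snd_prod, measure_univ, one_smul]
  have hG2 : MemLp (fun p : α × β => g p.2) 2 ρ :=
    (memLp_map_measure_iff hgsm.aestronglyMeasurable measurable_snd.aemeasurable).mp
      (by rw [hsnd]; exact hgL2)
  -- identify the conditional expectation with `g ∘ XnJ`
  have hm : MeasurableSpace.comap XnJ inferInstance ≤ ‹MeasurableSpace Ω› := hXnJ.comap_le
  haveI : SigmaFinite (μ.trim hm) := inferInstance
  have hZint : Integrable (fun ω => f (XJ ω, XnJ ω)) μ := hf2.integrable one_le_two
  have hGμint : Integrable (fun ω => g (XnJ ω)) μ := by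
    have h1 : Integrable g πnJ := hFint.integral_prod_right
    exact (integrable_map_measure hgsm.aestronglyMeasurable hXnJ.aemeasurable).mp h1
  have hsetint : ∀ s, MeasurableSet[MeasurableSpace.comap XnJ inferInstance] s → μ s < ⊤ →
      ∫ ω in s, g (XnJ ω) ∂μ = ∫ ω in s, f (XJ ω, XnJ ω) ∂μ := by
    rintro s ⟨B, hB, rfl⟩ -
    have hpre : (fun ω => (XJ ω, XnJ ω)) ⁻¹' (Set.univ ×ˢ B) = XnJ ⁻¹' B := by
      ext ω; simp
    have h1 : ∫ b in B, g b ∂πnJ = ∫ ω in XnJ ⁻¹' B, g (XnJ ω) ∂μ :=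
      setIntegral_map hB hgsm.aestronglyMeasurable hXnJ.aemeasurable
    have h2 : ∫ p in Set.univ ×ˢ B, f p ∂ρ = ∫ ω in XnJ ⁻¹' B, f (XJ ω, XnJ ω) ∂μ := by
      rw [← hmapT, setIntegral_map (MeasurableSet.univ.prod hB) hf.aestronglyMeasurable
        hT.aemeasurable, hpre]
    have h3 : ∫ p in Set.univ ×ˢ B, f p ∂ρ = ∫ b in B, g b ∂πnJ := by
      have hres : ρ.restrict (Set.univ ×ˢ B) = πJ.prod (πnJ.restrict B) := by
        rw [hρdef, ← Measure.prod_restrict, Measure.restrict_univ]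
      rw [show (∫ p in Set.univ ×ˢ B, f p ∂ρ) = ∫ p, f p ∂(ρ.restrict (Set.univ ×ˢ B)) from rfl,
        hres, integral_prod_symm _ (by rw [← hres]; exact hFint.restrict)]
    rw [← h1, ← h3, h2]
  have hGmeas : AEStronglyMeasurable[MeasurableSpace.comap XnJ inferInstance]
      (fun ω => g (XnJ ω)) μ :=
    StronglyMeasurable.aestronglyMeasurable
      (hgsm.comp_measurable (comap_measurable XnJ))
  have hCE : (fun ω => g (XnJ ω)) =ᵐ[μ]
      μ[(fun ω => f (XJ ω, XnJ ω)) | MeasurableSpace.comap XnJ inferInstance] :=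
    ae_eq_condExp_of_forall_setIntegral_eq hm hZint
      (fun s _ _ => hGμint.integrableOn) hsetint hGmeas
  -- transfer gVar to the product space
  have hgVarZ : gVar μ (fun ω => f (XJ ω, XnJ ω)) = gVar ρ f := by
    rw [← hmapT]
    exact (gVar_map μ hT.aemeasurable hf.aestronglyMeasurable).symm
  have hgVarG : gVar μ (fun ω => g (XnJ ω)) = gVar ρ (fun p => g p.2) := by
    have h1 : gVar πnJ g = gVar μ (fun ω => g (XnJ ω)) :=
      gVar_map μ hXnJ.aemeasurable hgsm.aestronglyMeasurable
    have h2 : gVar (ρ.map Prod.snd) g = gVar ρ (fun p => g p.2) :=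
      gVar_map ρ measurable_snd.aemeasurable hgsm.aestronglyMeasurable
    rw [← h1, ← hsnd, h2]
  have hgVarCE : gVar μ (μ[(fun ω => f (XJ ω, XnJ ω)) | MeasurableSpace.comap XnJ inferInstance])
      = gVar ρ (fun p => g p.2) := by
    rw [← gVar_congr_ae μ hCE, hgVarG]
  -- means
  set c : E := ∫ p, f p ∂ρ with hcdef
  have hmean_g : ∫ b, g b ∂πnJ = c := by
    rw [hcdef, hρdef, integral_prod_symm _ (by rw [← hρdef]; exact hFint)]
  have hmean_G : ∫ p, g p.2 ∂ρ = c := by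
    rw [← integral_map measurable_snd.aemeasurable hgsm.aestronglyMeasurable, hsnd]
    exact hmean_g
  -- Pythagoras on the product space
  have hGc2 : MemLp (fun p : α × β => g p.2 - c) 2 ρ := hG2.sub (memLp_const c)
  have hFG2 : MemLp (fun p : α × β => f p - g p.2) 2 ρ := hF2.sub hG2
  have hint1 : Integrable (fun p => ‖f p - g p.2‖ ^ 2) ρ :=
    (memLp_two_iff_integrable_sq_norm hFG2.aestronglyMeasurable).mp hFG2
  have hint3 : Integrable (fun p => ‖g p.2 - c‖ ^ 2) ρ :=
    (memLp_two_iff_integrable_sq_norm hGc2.aestronglyMeasurable).mp hGc2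
  have hcross_int : Integrable (fun p => (inner ℝ (g p.2 - c) (f p - g p.2) : ℝ)) ρ :=
    integrable_inner_of_memL2 hGc2 hFG2
  have hcross : ∫ p, (inner ℝ (g p.2 - c) (f p - g p.2) : ℝ) ∂ρ = 0 := by
    rw [hρdef, integral_prod_symm _ (by rw [← hρdef]; exact hcross_int)]
    have h0 : ∀ᵐ b ∂πnJ, (∫ y, (inner ℝ (g b - c) (f (y, b) - g b) : ℝ) ∂πJ) = 0 := by
      filter_upwards [hFint.prod_left_ae] with b hb
      have he : ∫ y, (inner ℝ (g b - c) (f (y, b) - g b) : ℝ) ∂πJ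
          = (inner ℝ (g b - c) (∫ y, (f (y, b) - g b) ∂πJ) : ℝ) :=
        integral_inner (hb.sub (integrable_const _)) (g b - c)
      rw [he, integral_sub hb (integrable_const _), integral_const, probReal_univ]
      simp [hgdef]
    exact (integral_congr_ae h0).trans (by simp)
  have hpt : ∀ p : α × β, ‖f p - c‖ ^ 2
      = ‖f p - g p.2‖ ^ 2 + 2 * (inner ℝ (g p.2 - c) (f p - g p.2) : ℝ) + ‖g p.2 - c‖ ^ 2 := by
    intro p
    have hsplit : f p - c = (f p - g p.2) + (g p.2 - c) := by abel
    rw [hsplit, norm_add_sq_real, real_inner_comm]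
  have hsum : ∫ p, ‖f p - c‖ ^ 2 ∂ρ
      = ∫ p, ‖f p - g p.2‖ ^ 2 ∂ρ + ∫ p, ‖g p.2 - c‖ ^ 2 ∂ρ := by
    calc ∫ p, ‖f p - c‖ ^ 2 ∂ρ
        = ∫ p, (‖f p - g p.2‖ ^ 2 + 2 * (inner ℝ (g p.2 - c) (f p - g p.2) : ℝ)
            + ‖g p.2 - c‖ ^ 2) ∂ρ :=
          integral_congr_ae (Filter.Eventually.of_forall fun p => hpt p)
      _ = (∫ p, (‖f p - g p.2‖ ^ 2 + 2 * (inner ℝ (g p.2 - c) (f p - g p.2) : ℝ)) ∂ρ)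
            + ∫ p, ‖g p.2 - c‖ ^ 2 ∂ρ :=
          integral_add (hint1.add (hcross_int.const_mul 2)) hint3
      _ = _ := by
          rw [integral_add hint1 (hcross_int.const_mul 2), integral_const_mul, hcross]
          ring
  have hgVarf : gVar ρ f = ∫ p, ‖f p - c‖ ^ 2 ∂ρ := by
    unfold gVar
    rw [← hcdef]
  have hgVarG₀ : gVar ρ (fun p => g p.2) = ∫ p, ‖g p.2 - c‖ ^ 2 ∂ρ := by
    unfold gVar
    rw [hmean_G]
  have hzero_int : ∫ p, ‖f p - g p.2‖ ^ 2 ∂ρ = 0 := by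
    rw [hgVarZ, hgVarCE, hgVarf, hgVarG₀] at htot
    linarith [hsum, htot]
  have hae0 : ∀ᵐ p ∂ρ, f p = g p.2 := by
    have h := (integral_eq_zero_iff_of_nonneg_ae
      (Filter.Eventually.of_forall fun p => sq_nonneg ‖f p - g p.2‖) hint1).mp hzero_int
    filter_upwards [h] with p hp
    have h2 : ‖f p - g p.2‖ ^ 2 = 0 := hp
    have h3 : f p - g p.2 = 0 := by
      rwa [pow_eq_zero_iff two_ne_zero, norm_eq_zero] at h2
    exact sub_eq_zero.mp h3
  -- conclusions
  have hS : MeasurableSet {p : α × β | f p = g p.2} :=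
    measurableSet_eq_fun hf (hgsm.measurable.comp measurable_snd)
  have hpull : ∀ {W : Ω → α × β}, Measurable W → μ.map W = ρ →
      (fun ω => f (W ω)) =ᵐ[μ] fun ω => g (W ω).2 := by
    intro W hW hWmap
    exact (ae_map_iff hW.aemeasurable hS).mp (by rw [hWmap]; exact hae0)
  have h1 : (fun ω => f (XJ ω, XnJ ω)) =ᵐ[μ] fun ω => g (XnJ ω) := hpull hT hmapT
  have hρ' : μ.map (fun ω => (YJ ω, XnJ ω)) = ρ := by
    have hind' : IndepFun YJ XnJ μ := hYindep.comp measurable_id measurable_snd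
    rw [(indepFun_iff_map_prod_eq_prod_map_map hYJ.aemeasurable hXnJ.aemeasurable).mp hind',
      hYid.map_eq]
  have h2 : (fun ω => f (YJ ω, XnJ ω)) =ᵐ[μ] fun ω => g (XnJ ω) :=
    hpull (hYJ.prodMk hXnJ) hρ'
  refine ⟨h2.trans h1.symm, ?_⟩
  have h3 : ∀ᵐ y ∂πJ, ∀ᵐ b ∂πnJ, (fun p : α × β => f p = g p.2) (y, b) :=
    Measure.ae_ae_of_ae_prod (by rw [← hρdef]; exact hae0)
  filter_upwards [h3] with y hy
  have hSy : MeasurableSet {b : β | f (y, b) = g b} :=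
    measurableSet_eq_fun (hf.comp measurable_prodMk_left) hgsm.measurable
  have hy' : ∀ᵐ ω ∂μ, f (y, XnJ ω) = g (XnJ ω) :=
    (ae_map_iff hXnJ.aemeasurable hSy).mp hy
  filter_upwards [hy', h1] with ω ha hb
  rw [ha, hb]
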